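/- The equation tan(x)² = 2√10 − 5 with x ∈ (0, π/2) has the unique solution x₁ = arctan(√(2√10 − 5)), and x₁ satisfies 4·tan(4x₁) = tan(x₁) (where all tangents involved are defined); moreover x₂ = π − x₁ also satisfies 4·tan(4x₂) = tan(x₂), and x₁, x₂ are the only solutions of 4·tan(4x) = tan(x) in (0, π). -/

import Mathlib

open Real Set

theorem stmt_17 :
    (∀ x ∈ Ioo (0 : ℝ) (π / 2),
      (tan x ^ 2 = 2 * Real.sqrt 10 - 5 ↔ x = arctan (Real.sqrt (2 * Real.sqrt 10 - 5)))) ∧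
    (4 * tan (4 * arctan (Real.sqrt (2 * Real.sqrt 10 - 5)))
        = tan (arctan (Real.sqrt (2 * Real.sqrt 10 - 5)))) ∧
    (4 * tan (4 * (π - arctan (Real.sqrt (2 * Real.sqrt 10 - 5))))
        = tan (π - arctan (Real.sqrt (2 * Real.sqrt 10 - 5)))) ∧
    (∀ x ∈ Ioo (0 : ℝ) π, cos x ≠ 0 → cos (4 * x) ≠ 0 →
      4 * tan (4 * x) = tan x →
      x = arctan (Real.sqrt (2 * Real.sqrt 10 - 5)) ∨
      x = π - arctan (Real.sqrt (2 * Real.sqrt 10 - 5))) := by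
  have h10 : (3:ℝ) < Real.sqrt 10 := by
    rw [show (3:ℝ) = Real.sqrt 9 by rw [show (9:ℝ) = 3^2 by norm_num, Real.sqrt_sq]; norm_num]
    exact Real.sqrt_lt_sqrt (by norm_num) (by norm_num)
  have hq : Real.sqrt 10 ^ 2 = 10 := Real.sq_sqrt (by norm_num)
  have hcpos : (0:ℝ) < 2 * Real.sqrt 10 - 5 := by nlinarith
  set s : ℝ := Real.sqrt (2 * Real.sqrt 10 - 5) with hs_def
  have hs_pos : 0 < s := Real.sqrt_pos.mpr hcpos
  have hs2 : s ^ 2 = 2 * Real.sqrt 10 - 5 := Real.sq_sqrt hcpos.le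
  have hd1 : 1 - s ^ 2 ≠ 0 := by rw [hs2]; nlinarith
  have hd2 : 1 - (2 * s / (1 - s ^ 2)) ^ 2 ≠ 0 := by
    intro h
    field_simp [hd1] at h
    nlinarith [hs2, hq]
  have hd2s : (1 - s ^ 2) ^ 2 - (2 * s) ^ 2 ≠ 0 := by nlinarith [hs2, hq]
  -- part 2
  have key2 : 4 * tan (4 * arctan s) = tan (arctan s) := by
    rw [show (4:ℝ) * arctan s = 2 * (2 * arctan s) by ring, Real.tan_two_mul,
      Real.tan_two_mul, Real.tan_arctan]
    field_simp [hd1, hd2s]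
    rw [div_eq_iff (by rw [show (1 - s ^ 2) ^ 2 - 2 ^ 2 * s ^ 2 = (1 - s ^ 2) ^ 2 - (2 * s) ^ 2 by ring]; exact hd2s)]
    have e1 : s ^ 4 = 65 - 20 * Real.sqrt 10 := by
      linear_combination (s ^ 2 + (2 * Real.sqrt 10 - 5)) * hs2 + 4 * hq
    have e2 : s ^ 4 + 10 * s ^ 2 - 15 = 0 := by linear_combination e1 + 10 * hs2
    linear_combination (-1) * e2
  -- part 1
  have part1 : ∀ x ∈ Ioo (0 : ℝ) (π / 2),
      (tan x ^ 2 = 2 * Real.sqrt 10 - 5 ↔ x = arctan s) := by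
    intro x hx
    constructor
    · intro h
      have htp : 0 < tan x := Real.tan_pos_of_pos_of_lt_pi_div_two hx.1 hx.2
      have hts : tan x = s := by nlinarith [hs2]
      rw [← hts, Real.arctan_tan (by linarith [hx.1, Real.pi_pos]) hx.2]
    · intro h
      rw [h, Real.tan_arctan, hs2]
  refine ⟨part1, key2, ?_, ?_⟩
  · -- part 3
    rw [show (4:ℝ) * (π - arctan s) = -(4 * arctan s) + π + π + π + π by ring,
      Real.tan_add_pi, Real.tan_add_pi, Real.tan_add_pi, Real.tan_add_pi, Real.tan_neg,
      show π - arctan s = -arctan s + π by ring, Real.tan_add_pi, Real.tan_neg]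
    linarith [key2]
  · -- part 4
    intro x hx hcx hc4x heq
    have hsin : 0 < Real.sin x := Real.sin_pos_of_pos_of_lt_pi hx.1 hx.2
    have ht0 : tan x ≠ 0 := by
      rw [Real.tan_eq_sin_div_cos]
      exact div_ne_zero (ne_of_gt hsin) hcx
    rw [show (4:ℝ) * x = 2 * (2 * x) by ring, Real.tan_two_mul, Real.tan_two_mul] at heq
    set t := tan x with ht_def
    rcases eq_or_ne (1 - t ^ 2) 0 with h1 | h1
    · rw [h1, div_zero] at heq
      norm_num at heq
      exact absurd heq.symm ht0
    rcases eq_or_ne (1 - (2 * t / (1 - t ^ 2)) ^ 2) 0 with h2 | h2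
    · rw [h2, div_zero] at heq
      norm_num at heq
      exact absurd heq.symm ht0
    have h2' : (1 - t ^ 2) ^ 2 - (2 * t) ^ 2 ≠ 0 := by
      intro hz
      apply h2
      rw [div_pow, show (2 * t) ^ 2 = (1 - t ^ 2) ^ 2 by linarith,
        div_self (pow_ne_zero 2 h1)]
      ring
    have heq' : t * (t ^ 4 + 10 * t ^ 2 - 15) = 0 := by
      field_simp [h1, h2'] at heq
      rw [div_eq_iff (by rw [show (1 - t ^ 2) ^ 2 - 2 ^ 2 * t ^ 2 = (1 - t ^ 2) ^ 2 - (2 * t) ^ 2 by ring]; exact h2')] at heq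
      have h3 : (1 - t ^ 2) * (t * (t ^ 4 + 10 * t ^ 2 - 15)) = 0 := by
        linear_combination (-((1 - t ^ 2) * t)) * heq
      exact (mul_eq_zero.mp h3).resolve_left h1
    have hpoly : t ^ 4 + 10 * t ^ 2 - 15 = 0 := by
      rcases mul_eq_zero.mp heq' with h | h
      · exact absurd h ht0
      · exact h
    have ht2 : t ^ 2 = 2 * Real.sqrt 10 - 5 := by
      nlinarith [hq, sq_nonneg t, Real.sqrt_nonneg 10]
    have hfac : (t - s) * (t + s) = 0 := by nlinarith [ht2, hs2]
    have hxne : x ≠ π / 2 := by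
      intro h; rw [h] at hcx; exact hcx Real.cos_pi_div_two
    rcases mul_eq_zero.mp hfac with h | h
    · -- t = s > 0, so x < π/2
      have hts : t = s := by linarith
      have hxlt : x < π / 2 := by
        by_contra hge
        push_neg at hge
        have hgt : π / 2 < x := lt_of_le_of_ne hge (Ne.symm hxne)
        have hcneg : Real.cos x < 0 :=
          Real.cos_neg_of_pi_div_two_lt_of_lt hgt (by linarith [hx.2, Real.pi_pos])
        have : tan x < 0 := by
          rw [Real.tan_eq_sin_div_cos]
          exact div_neg_of_pos_of_neg hsin hcneg
        rw [← ht_def] at this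
        linarith [hs_pos]
      left
      rw [← Real.arctan_tan (x := x) (by linarith [hx.1, Real.pi_pos]) hxlt, ← ht_def, hts]
    · -- t = -s < 0, so x > π/2
      have hts : t = -s := by linarith
      have hxgt : π / 2 < x := by
        by_contra hle
        push_neg at hle
        have hlt : x < π / 2 := lt_of_le_of_ne hle hxne
        have : 0 < tan x := Real.tan_pos_of_pos_of_lt_pi_div_two hx.1 hlt
        rw [← ht_def] at this
        linarith [hs_pos]
      right
      have h1' : x - π ∈ Set.Ioo (-(π/2)) (π/2) := by
        constructor <;> linarith [Real.pi_pos, hxgt, hx.2]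
      have : arctan (tan (x - π)) = x - π := Real.arctan_tan h1'.1 h1'.2
      rw [Real.tan_sub_pi, ← ht_def, hts, Real.arctan_neg] at this
      linarith
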